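/- Suppose ℓ is differentiable and strictly decreasing, the SVM constraints defining p^{mm⋆} are feasible, and for every sample i the scores of all non-optimal tokens are equal (γ_{it₁} = γ_{it₂} for all t₁, t₂ ≠ optᵢ) while γ_{i,optᵢ} > γ_{it} для all t ≠ optᵢ. Then the training objective ℒ has no stationary points: ∇ℒ(p) ≠ 0 for every p ∈ ℝ^d. -/

import Mathlib

open scoped RealInnerProductSpace

/-- Identify a plain function `Fin d → ℝ` with a point of Euclidean space. -/
noncomputable def toEuc {d : ℕ} (f : Fin d → ℝ) : EuclideanSpace ℝ (Fin d) := WithLp.toLp 2 f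

/-- The softmax map `𝕊(a)_t = e^{a_t} / Σ_τ e^{a_τ}`. -/
noncomputable def softmax {T : ℕ} (a : Fin T → ℝ) : Fin T → ℝ :=
  fun t => Real.exp (a t) / ∑ τ, Real.exp (a τ)

/-- Token scores `γᵢ = Yᵢ · Xᵢ v`, entrywise `γ_{it} = Yᵢ · x_{it}⊤v`. -/
noncomputable def score {n d T : ℕ} (X : Fin n → Matrix (Fin T) (Fin d) ℝ)
    (Y : Fin n → ℝ) (v : Fin d → ℝ) (i : Fin n) (t : Fin T) : ℝ :=
  Y i * ∑ j, X i t j * v j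

/-- Key rows `k_{it} = W⊤ x_{it}`, i.e. the rows of `Kᵢ = Xᵢ W`. -/
noncomputable def key {n d T : ℕ} (X : Fin n → Matrix (Fin T) (Fin d) ℝ)
    (W : Matrix (Fin d) (Fin d) ℝ) (i : Fin n) (t : Fin T) (j : Fin d) : ℝ :=
  (X i * W) t j

/-- Softmax attention probabilities `𝕊(Kᵢ p)`. -/
noncomputable def sprob {n d T : ℕ} (X : Fin n → Matrix (Fin T) (Fin d) ℝ)
    (W : Matrix (Fin d) (Fin d) ℝ) (i : Fin n) (p : EuclideanSpace ℝ (Fin d)) :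
    Fin T → ℝ :=
  softmax (fun t => ∑ j, key X W i t j * p j)

/-- The training objective `ℒ(p) = (1/n) Σᵢ ℓ(γᵢ⊤ 𝕊(Kᵢ p))`. -/
noncomputable def tLoss {n d T : ℕ} (ℓ : ℝ → ℝ)
    (X : Fin n → Matrix (Fin T) (Fin d) ℝ) (Y : Fin n → ℝ) (v : Fin d → ℝ)
    (W : Matrix (Fin d) (Fin d) ℝ) (p : EuclideanSpace ℝ (Fin d)) : ℝ :=
  (n : ℝ)⁻¹ * ∑ i, ℓ (∑ t, score X Y v i t * sprob X W i p t)

theorem univ_nonempty_of_pos {n : ℕ} (hn : 0 < n) :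
    (Finset.univ : Finset (Fin n)).Nonempty := ⟨⟨0, hn⟩, Finset.mem_univ _⟩

theorem erase_nonempty_of_two_le {T : ℕ} (hT : 2 ≤ T) (t0 : Fin T) :
    (Finset.univ.erase t0).Nonempty := by
  rw [← Finset.card_pos, Finset.card_erase_of_mem (Finset.mem_univ _), Finset.card_univ,
    Fintype.card_fin]
  omega

/-- Derivative of `s ↦ Σ_t γ_t softmax(A + sB)_t` at `s = 0`. -/
theorem line_hasDerivAt {T : ℕ} (hT : 0 < T) (γ A B : Fin T → ℝ) :
    HasDerivAt (fun s : ℝ => ∑ t, γ t *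
        (Real.exp (A t + s * B t) / ∑ τ, Real.exp (A τ + s * B τ)))
      (∑ t, γ t * ((Real.exp (A t) * B t * (∑ τ, Real.exp (A τ)) -
        Real.exp (A t) * ∑ τ, Real.exp (A τ) * B τ) / (∑ τ, Real.exp (A τ)) ^ 2)) 0 := by
  have hZpos : (0:ℝ) < ∑ τ, Real.exp (A τ) :=
    Finset.sum_pos (fun τ _ => Real.exp_pos _) ⟨⟨0, hT⟩, Finset.mem_univ _⟩
  have hnum : ∀ t : Fin T, HasDerivAt (fun s : ℝ => Real.exp (A t + s * B t))
      (Real.exp (A t) * B t) 0 := by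
    intro t
    have h1 : HasDerivAt (fun s : ℝ => A t + s * B t) (B t) 0 :=
      (hasDerivAt_mul_const (B t)).const_add (A t)
    simpa using h1.exp
  have hden : HasDerivAt (fun s : ℝ => ∑ τ, Real.exp (A τ + s * B τ))
      (∑ τ, Real.exp (A τ) * B τ) 0 := HasDerivAt.fun_sum (fun τ _ => hnum τ)
  have hZne : (∑ τ, Real.exp (A τ + (0:ℝ) * B τ)) ≠ 0 := by simpa using hZpos.ne'
  have h := HasDerivAt.fun_sum (u := Finset.univ)
    (fun t _ => (((hnum t).div hden hZne).const_mul (γ t)))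
  simpa using h


theorem line_deriv_pos {T : ℕ} (hT : 2 ≤ T) (γ A B : Fin T → ℝ) (t0 : Fin T)
    (hB : ∀ t, t ≠ t0 → 1 ≤ B t0 - B t)
    (hsame : ∀ t₁ t₂, t₁ ≠ t0 → t₂ ≠ t0 → γ t₁ = γ t₂)
    (hopt : ∀ t, t ≠ t0 → γ t < γ t0) :
    0 < ∑ t, γ t * ((Real.exp (A t) * B t * (∑ τ, Real.exp (A τ)) -
      Real.exp (A t) * ∑ τ, Real.exp (A τ) * B τ) / (∑ τ, Real.exp (A τ)) ^ 2) := by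
  set E : Fin T → ℝ := fun t => Real.exp (A t) with hE
  set Z : ℝ := ∑ τ, E τ with hZ
  set N : ℝ := ∑ τ, E τ * B τ with hN
  obtain ⟨t1, ht1⟩ := erase_nonempty_of_two_le hT t0
  have ht1ne : t1 ≠ t0 := (Finset.mem_erase.mp ht1).1
  have hEpos : ∀ t, 0 < E t := fun t => Real.exp_pos _
  have hZpos : 0 < Z := Finset.sum_pos (fun τ _ => hEpos τ) ⟨t0, Finset.mem_univ _⟩
  have key1 : ∑ t, γ t * ((E t * B t * Z - E t * N) / Z ^ 2)
      = (∑ t, γ t * (E t * B t * Z - E t * N)) / Z ^ 2 := by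
    rw [Finset.sum_div]; exact Finset.sum_congr rfl fun t _ => (mul_div_assoc _ _ _).symm
  rw [key1]
  apply div_pos _ (by positivity)
  have hzero : ∑ t, E t * (B t * Z - N) = 0 := by
    have h1 : ∀ t : Fin T, E t * (B t * Z - N) = (E t * B t) * Z - E t * N := fun t => by ring
    rw [Finset.sum_congr rfl (fun t _ => h1 t), Finset.sum_sub_distrib,
      ← Finset.sum_mul, ← Finset.sum_mul]
    rw [← hN, ← hZ]
    ring
  have hnum : ∑ t, γ t * (E t * B t * Z - E t * N)
      = (γ t0 - γ t1) * (E t0 * (B t0 * Z - N)) := by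
    have split : ∀ t : Fin T, γ t * (E t * B t * Z - E t * N)
        = (γ t - γ t1) * (E t * (B t * Z - N)) + γ t1 * (E t * (B t * Z - N)) :=
      fun t => by ring
    rw [Finset.sum_congr rfl (fun t _ => split t), Finset.sum_add_distrib,
      ← Finset.mul_sum, hzero, mul_zero, add_zero]
    rw [Finset.sum_eq_single t0]
    · intro b _ hb
      rw [hsame b t1 hb ht1ne, sub_self, zero_mul]
    · intro h; exact absurd (Finset.mem_univ t0) h
  rw [hnum]
  apply mul_pos (sub_pos.mpr (hopt t1 ht1ne))
  apply mul_pos (hEpos t0)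
  have hrew : B t0 * Z - N = ∑ τ, E τ * (B t0 - B τ) := by
    have h1 : ∀ τ : Fin T, E τ * (B t0 - B τ) = B t0 * E τ - E τ * B τ := fun τ => by ring
    rw [Finset.sum_congr rfl (fun τ _ => h1 τ), Finset.sum_sub_distrib, ← Finset.mul_sum,
      ← hZ, ← hN]
  rw [hrew, ← Finset.sum_erase_add _ _ (Finset.mem_univ t0), sub_self, mul_zero, add_zero]
  exact Finset.sum_pos (fun τ hτ => mul_pos (hEpos τ)
    (lt_of_lt_of_le one_pos (hB τ (Finset.mem_erase.mp hτ).1))) ⟨t1, ht1⟩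


/-- **No stationary points.** If `ℓ` is differentiable and strictly decreasing, the SVM
constraints are feasible (witnessed by the minimal-norm solution `p^{mm⋆}`), and for each
sample all non-optimal token scores coincide while the optimal score is strictly largest,
then the training objective `ℒ` has no stationary points: `∇ℒ(p) ≠ 0` for every `p`. -/
theorem no_stationary_points (n d T : ℕ) (hn : 0 < n) (hT : 2 ≤ T)
    (X : Fin n → Matrix (Fin T) (Fin d) ℝ) (Y : Fin n → ℝ)
    (hY : ∀ i, Y i = 1 ∨ Y i = -1)
    (v : Fin d → ℝ) (W : Matrix (Fin d) (Fin d) ℝ)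
    (ℓ : ℝ → ℝ) (hdiff : Differentiable ℝ ℓ) (hanti : StrictAnti ℓ)
    (hderiv : ∀ x, deriv ℓ x < 0)
    (opt : Fin n → Fin T) (pmm : EuclideanSpace ℝ (Fin d))
    (hfeas : ∀ i, ∀ t, t ≠ opt i →
      1 ≤ ∑ j, (key X W i (opt i) j - key X W i t j) * pmm j)
    (hmin : ∀ q : EuclideanSpace ℝ (Fin d),
      (∀ i, ∀ t, t ≠ opt i → 1 ≤ ∑ j, (key X W i (opt i) j - key X W i t j) * q j) →
      ‖pmm‖ ≤ ‖q‖)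
    (hsame : ∀ i, ∀ t₁ t₂, t₁ ≠ opt i → t₂ ≠ opt i →
      score X Y v i t₁ = score X Y v i t₂)
    (hopt : ∀ i, ∀ t, t ≠ opt i → score X Y v i t < score X Y v i (opt i)) :
    ∀ p : EuclideanSpace ℝ (Fin d), gradient (tLoss ℓ X Y v W) p ≠ 0 := by
  have hT0 : 0 < T := by omega
  intro p hgrad
  set A : Fin n → Fin T → ℝ := fun i t => ∑ j, key X W i t j * p j with hA
  set B : Fin n → Fin T → ℝ := fun i t => ∑ j, key X W i t j * pmm j with hB
  -- linearity along the line
  have hlin : ∀ (s : ℝ) (i : Fin n) (t : Fin T),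
      (∑ j, key X W i t j * (p + s • pmm) j) = A i t + s * B i t := by
    intro s i t
    have happ : ∀ j : Fin d, (p + s • pmm) j = p j + s * pmm j := fun j => rfl
    calc ∑ j, key X W i t j * (p + s • pmm) j
        = ∑ j, (key X W i t j * p j + s * (key X W i t j * pmm j)) := by
          refine Finset.sum_congr rfl fun j _ => ?_
          rw [happ j]; ring
      _ = A i t + s * B i t := by
          rw [Finset.sum_add_distrib, ← Finset.mul_sum]
  -- the objective along the line
  have hgeq : (fun s : ℝ => tLoss ℓ X Y v W (p + s • pmm))
      = fun s : ℝ => (n : ℝ)⁻¹ * ∑ i, ℓ (∑ t, score X Y v i t *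
          (Real.exp (A i t + s * B i t) / ∑ τ, Real.exp (A i τ + s * B i τ))) := by
    funext s
    unfold tLoss sprob softmax
    simp only [hlin]
  -- per-sample derivative of ℓ ∘ (line objective)
  have hi : ∀ i : Fin n, HasDerivAt (fun s : ℝ => ℓ (∑ t, score X Y v i t *
        (Real.exp (A i t + s * B i t) / ∑ τ, Real.exp (A i τ + s * B i τ))))
      (deriv ℓ (∑ t, score X Y v i t * (Real.exp (A i t) / ∑ τ, Real.exp (A i τ))) *
        (∑ t, score X Y v i t * ((Real.exp (A i t) * B i t * (∑ τ, Real.exp (A i τ)) -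
          Real.exp (A i t) * ∑ τ, Real.exp (A i τ) * B i τ) / (∑ τ, Real.exp (A i τ)) ^ 2)))
      0 := by
    intro i
    have h1 := line_hasDerivAt hT0 (score X Y v i) (A i) (B i)
    have h0eq : (∑ t, score X Y v i t *
        (Real.exp (A i t + (0:ℝ) * B i t) / ∑ τ, Real.exp (A i τ + (0:ℝ) * B i τ)))
        = ∑ t, score X Y v i t * (Real.exp (A i t) / ∑ τ, Real.exp (A i τ)) := by
      simp
    have h2 : HasDerivAt ℓ
        (deriv ℓ (∑ t, score X Y v i t * (Real.exp (A i t) / ∑ τ, Real.exp (A i τ))))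
        (∑ t, score X Y v i t *
          (Real.exp (A i t + (0:ℝ) * B i t) / ∑ τ, Real.exp (A i τ + (0:ℝ) * B i τ))) := by
      rw [h0eq]; exact (hdiff _).hasDerivAt
    exact h2.comp 0 h1
  -- derivative of the full objective along the line
  have hgd : HasDerivAt (fun s : ℝ => tLoss ℓ X Y v W (p + s • pmm))
      ((n : ℝ)⁻¹ * ∑ i, deriv ℓ (∑ t, score X Y v i t *
          (Real.exp (A i t) / ∑ τ, Real.exp (A i τ))) *
        (∑ t, score X Y v i t * ((Real.exp (A i t) * B i t * (∑ τ, Real.exp (A i τ)) -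
          Real.exp (A i t) * ∑ τ, Real.exp (A i τ) * B i τ) / (∑ τ, Real.exp (A i τ)) ^ 2)))
      0 := by
    rw [hgeq]
    exact (HasDerivAt.fun_sum (fun i _ => hi i)).const_mul _
  -- the derivative value is negative
  have hBf : ∀ i, ∀ t, t ≠ opt i → 1 ≤ B i (opt i) - B i t := by
    intro i t ht
    have h := hfeas i t ht
    calc (1:ℝ) ≤ ∑ j, (key X W i (opt i) j - key X W i t j) * pmm j := h
      _ = B i (opt i) - B i t := by
          simp only [sub_mul]
          rw [Finset.sum_sub_distrib]
  have hneg : ((n : ℝ)⁻¹ * ∑ i, deriv ℓ (∑ t, score X Y v i t *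
          (Real.exp (A i t) / ∑ τ, Real.exp (A i τ))) *
        (∑ t, score X Y v i t * ((Real.exp (A i t) * B i t * (∑ τ, Real.exp (A i τ)) -
          Real.exp (A i t) * ∑ τ, Real.exp (A i τ) * B i τ) / (∑ τ, Real.exp (A i τ)) ^ 2)))
      < 0 := by
    apply mul_neg_of_pos_of_neg (inv_pos.mpr (Nat.cast_pos.mpr hn))
    refine Finset.sum_neg (fun i _ => ?_) ⟨⟨0, hn⟩, Finset.mem_univ _⟩
    exact mul_neg_of_neg_of_pos (hderiv _)
      (line_deriv_pos hT (score X Y v i) (A i) (B i) (opt i) (hBf i) (hsame i) (hopt i))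
  -- tLoss is differentiable
  have hlindiff : ∀ (i : Fin n) (t : Fin T), Differentiable ℝ
      (fun q : EuclideanSpace ℝ (Fin d) => ∑ j, key X W i t j * q j) :=
    fun i t => Differentiable.fun_sum fun j _ =>
      ((EuclideanSpace.proj j : EuclideanSpace ℝ (Fin d) →L[ℝ] ℝ).differentiable).const_mul _
  have hdL : Differentiable ℝ (tLoss ℓ X Y v W) := by
    unfold tLoss sprob softmax
    apply Differentiable.const_mul
    apply Differentiable.fun_sum
    intro i _
    apply hdiff.comp
    apply Differentiable.fun_sum
    intro t _
    apply Differentiable.const_mul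
    show Differentiable ℝ fun q : EuclideanSpace ℝ (Fin d) =>
      Real.exp (∑ j, key X W i t j * q j) / ∑ τ, Real.exp (∑ j, key X W i τ j * q j)
    have hden : Differentiable ℝ (fun q : EuclideanSpace ℝ (Fin d) =>
        ∑ τ, Real.exp (∑ j, key X W i τ j * q j)) :=
      Differentiable.fun_sum fun τ _ => Real.differentiable_exp.comp (hlindiff i τ)
    have hnum2 : Differentiable ℝ (fun q : EuclideanSpace ℝ (Fin d) =>
        Real.exp (∑ j, key X W i t j * q j)) :=
      Real.differentiable_exp.comp (hlindiff i t)
    have hne : ∀ q : EuclideanSpace ℝ (Fin d),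
        (∑ τ, Real.exp (∑ j, key X W i τ j * q j)) ≠ 0 := fun q =>
      (Finset.sum_pos (fun τ _ => Real.exp_pos _) ⟨⟨0, hT0⟩, Finset.mem_univ _⟩).ne'
    have : Differentiable ℝ (fun q : EuclideanSpace ℝ (Fin d) =>
        Real.exp (∑ j, key X W i t j * q j) *
          (∑ τ, Real.exp (∑ j, key X W i τ j * q j))⁻¹) :=
      hnum2.mul (hden.inv hne)
    simpa [div_eq_mul_inv] using this
  -- zero gradient gives zero directional derivative
  have hgrad0 : HasGradientAt (tLoss ℓ X Y v W) 0 p := hgrad ▸ (hdL p).hasGradientAt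
  have hfd : HasFDerivAt (tLoss ℓ X Y v W)
      (0 : EuclideanSpace ℝ (Fin d) →L[ℝ] ℝ) p := by
    have h := hgrad0.hasFDerivAt
    simpa using h
  have hline : HasDerivAt (fun s : ℝ => p + s • pmm) pmm 0 := by
    simpa using ((hasDerivAt_id (0:ℝ)).smul_const pmm).const_add p
  have hcomp : HasDerivAt (fun s : ℝ => tLoss ℓ X Y v W (p + s • pmm))
      ((0 : EuclideanSpace ℝ (Fin d) →L[ℝ] ℝ) pmm) 0 := by
    have hfd' : HasFDerivAt (tLoss ℓ X Y v W)
        (0 : EuclideanSpace ℝ (Fin d) →L[ℝ] ℝ) (p + (0:ℝ) • pmm) := by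
      simpa using hfd
    exact hfd'.comp_hasDerivAt 0 hline
  have := hgd.unique hcomp
  simp only [ContinuousLinearMap.zero_apply] at this
  rw [this] at hneg
  exact lt_irrefl 0 hneg
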